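/- Let n ≥ 2 and consider the polynomial ring ℚ[z₁,…,z_{n−1},t]. Define θ_k := z_k(z_k − (1/2)z_{k−1} − (1/2)z_{k+1} − t) for k = 1,…,n−1 (with the convention z₀ = z_n = 0), and θ_n := t. Then θ₁,…,θ_{n−1},θ_n is a regular sequence in ℚ[z₁,…,z_{n−1},t]. -/

import Mathlib

/-- A sequence `θ 0, …, θ (r-1)` of elements of a commutative ring `R` is a regular
sequence if for each `j` the image of `θ j` in the quotient `R ⧸ (θ 0, …, θ (j-1))`
is a non-zero-divisor (nonzero, with injective multiplication), and moreover the final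
quotient `R ⧸ (θ 0, …, θ (r-1))` is nonzero. -/
def IsRegularSeq {R : Type*} [CommRing R] {r : ℕ} (θ : Fin r → R) : Prop :=
  (∀ j : Fin r,
    Ideal.Quotient.mk (Ideal.span (θ '' {i | i < j})) (θ j) ≠ 0 ∧
      Function.Injective fun x : R ⧸ Ideal.span (θ '' {i | i < j}) =>
        Ideal.Quotient.mk (Ideal.span (θ '' {i | i < j})) (θ j) * x) ∧
  Nontrivial (R ⧸ Ideal.span (Set.range θ))

/-- The variable `z_k` (1-indexed, `k = 1, …, n-1`) of `ℚ[z₁,…,z_{n-1},t]`, with the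
convention `z₀ = z_n = 0`.  The variable `t` is `MvPolynomial.X none`. -/
noncomputable def zVar (n : ℕ) (k : ℕ) : MvPolynomial (Option (Fin (n - 1))) ℚ :=
  if h : 1 ≤ k ∧ k ≤ n - 1 then MvPolynomial.X (some ⟨k - 1, by omega⟩) else 0

/-- The Peterson relations: `θ k = z_k (z_k − (1/2) z_{k-1} − (1/2) z_{k+1} − t)` for
`k = 1, …, n-1` (with `z₀ = z_n = 0`), and `θ n = t`.  Here `j : Fin n` encodes
`k = j + 1`. -/
noncomputable def petersonTheta (n : ℕ) (j : Fin n) :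
    MvPolynomial (Option (Fin (n - 1))) ℚ :=
  if (j : ℕ) + 1 ≤ n - 1 then
    zVar n ((j : ℕ) + 1) *
      (zVar n ((j : ℕ) + 1) - MvPolynomial.C (1/2 : ℚ) * zVar n (j : ℕ)
        - MvPolynomial.C (1/2 : ℚ) * zVar n ((j : ℕ) + 2) - MvPolynomial.X none)
  else MvPolynomial.X none

set_option linter.unusedSectionVars false

open MvPolynomial

namespace Pet

variable {σ : Type*} [Fintype σ] [DecidableEq σ]

noncomputable def lin (w : σ → ℚ) : MvPolynomial σ ℚ := ∑ v, C (w v) * X v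

noncomputable def sub (v : σ) (p : MvPolynomial σ ℚ) :
    MvPolynomial σ ℚ →ₐ[ℚ] MvPolynomial σ ℚ :=
  aeval (fun u => if u = v then p else X u)


@[simp] lemma sub_X_same (v : σ) (p : MvPolynomial σ ℚ) : sub v p (X v) = p := by
  simp [sub]

@[simp] lemma sub_C (v : σ) (p : MvPolynomial σ ℚ) (a : ℚ) : sub v p (C a) = C a := by
  simp [sub, algebraMap_eq]

lemma sub_X_ne (v : σ) (p : MvPolynomial σ ℚ) {u : σ} (h : u ≠ v) : sub v p (X u) = X u := by
  simp [sub, h]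

lemma algHom_C (φ : MvPolynomial σ ℚ →ₐ[ℚ] MvPolynomial σ ℚ) (r : ℚ) : φ (C r) = C r := by
  rw [← algebraMap_eq]; exact φ.commutes r

lemma lin_add (w w' : σ → ℚ) : lin (fun v => w v + w' v) = lin w + lin w' := by
  simp [lin, add_mul, Finset.sum_add_distrib]

lemma lin_smul (r : ℚ) (w : σ → ℚ) : lin (fun v => r * w v) = C r * lin w := by
  simp [lin, Finset.mul_sum, mul_assoc]

lemma lin_single (u : σ) (r : ℚ) : lin (fun v => if v = u then r else 0) = C r * X u := by
  rw [lin, Finset.sum_eq_single u]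
  · simp
  · intro b _ hb; simp [hb]
  · intro h; exact absurd (Finset.mem_univ u) h

lemma lin_zero : lin (fun _ : σ => (0:ℚ)) = 0 := by simp [lin]

lemma sub_lin (v : σ) (p : MvPolynomial σ ℚ) (w : σ → ℚ) (hw : w v = 0) :
    sub v p (lin w) = lin w := by
  rw [lin, map_sum]
  refine Finset.sum_congr rfl fun u _ => ?_
  rcases eq_or_ne u v with rfl | h
  · simp [hw]
  · rw [map_mul, sub_C, sub_X_ne v p h]

lemma coeff_lin (w : σ → ℚ) (d : σ →₀ ℕ) :
    coeff d (lin w) = ∑ v, w v * (if Finsupp.single v 1 = d then 1 else 0) := by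
  rw [lin, coeff_sum]
  refine Finset.sum_congr rfl fun u _ => ?_
  simp [coeff_C_mul, coeff_X']

lemma coeff_lin_single (w : σ → ℚ) (u : σ) :
    coeff (Finsupp.single u 1) (lin w) = w u := by
  rw [coeff_lin, Finset.sum_eq_single u]
  · simp
  · intro b _ hb
    have : Finsupp.single b (1:ℕ) ≠ Finsupp.single u 1 := by
      intro h; exact hb (Finsupp.single_left_injective one_ne_zero h)
    simp [this]
  · intro h; exact absurd (Finset.mem_univ u) h

lemma coeff_lin_nonneg (w : σ → ℚ) (hw : ∀ v, 0 ≤ w v) (d : σ →₀ ℕ) :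
    0 ≤ coeff d (lin w) := by
  rw [coeff_lin]
  refine Finset.sum_nonneg fun v _ => ?_
  by_cases h : Finsupp.single v 1 = d <;> simp [h, hw v]

/-- key congruence: `g ≡ sub v p g` modulo `(X v - p)`. -/
lemma sub_sub_mem (v : σ) (p : MvPolynomial σ ℚ) (g : MvPolynomial σ ℚ) :
    g - sub v p g ∈ Ideal.span {X v - p} := by
  induction g using MvPolynomial.induction_on with
  | C a => simp [sub, algebraMap_eq]
  | add f g hf hg =>
      have : f + g - sub v p (f + g) = (f - sub v p f) + (g - sub v p g) := by
        rw [map_add]; ring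
      rw [this]; exact add_mem hf hg
  | mul_X f i hf =>
      have : f * X i - sub v p (f * X i)
          = (f - sub v p f) * X i + sub v p f * (X i - sub v p (X i)) := by
        rw [map_mul]; ring
      rw [this]
      refine add_mem (Ideal.mul_mem_right _ _ hf) ?_
      rcases eq_or_ne i v with rfl | h
      · rw [sub_X_same]
        exact Ideal.mul_mem_left _ _ (Ideal.subset_span rfl)
      · rw [sub_X_ne v p h]; simp

variable (x : ℕ → σ) (a : ℚ) (β γ : ℕ → ℚ) (c : ℕ → σ → ℚ)

/-- value substituted for the top chain variable `x m` (data with `m+1` relations) -/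
noncomputable def sVal (m : ℕ) : MvPolynomial σ ℚ :=
  C a⁻¹ * ((if m = 0 then 0 else C (β m) * X (x (m-1))) + lin (c m))

/-- the relations -/
noncomputable def theta (m : ℕ) (k : ℕ) : MvPolynomial σ ℚ :=
  X (x k) * (C (if k = m - 1 then a else 1) * X (x k)
    - (if k = 0 then 0 else C (β k) * X (x (k-1)))
    - (if k + 2 ≤ m then C (γ k) * X (x (k+1)) else 0)
    - lin (c k))

/-- updated coefficient vectors after substituting the top variable -/
noncomputable def upc (m : ℕ) : ℕ → σ → ℚ :=
  Function.update c (m-1) (fun v => c (m-1) v + γ (m-1) / a * c m v)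

noncomputable def upa (m : ℕ) : ℚ := 1 - γ (m-1) * β m / a

/-- the branch substitution maps -/
noncomputable def branches :
    (m : ℕ) → ℚ → (ℕ → σ → ℚ) → List (MvPolynomial σ ℚ →ₐ[ℚ] MvPolynomial σ ℚ)
  | 0, _, _ => [AlgHom.id ℚ _]
  | (m+1), a, c =>
      ((branches m 1 c).map (fun φ => φ.comp (sub (x m) 0))) ++
      ((branches m (upa a β γ m) (upc a γ c m)).map
        (fun φ => φ.comp (sub (x m) (sVal x a β c m))))

variable (t₀ : σ)

/-- admissibility hypotheses on the data -/
structure Good (m : ℕ) : Prop where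
  hx : ∀ i j, i < m → j < m → x i = x j → i = j
  ht : ∀ i, i < m → x i ≠ t₀
  ha : 1/2 < a
  hβ : ∀ k, 0 ≤ β k ∧ β k ≤ 1/2
  hγ : ∀ k, 0 ≤ γ k ∧ γ k ≤ 1/2
  hc1 : ∀ k, k < m → ∀ v, 0 ≤ c k v
  hc2 : ∀ k, k < m → 1 ≤ c k t₀
  hc3 : ∀ k, k < m → ∀ i, i < m → c k (x i) = 0

lemma good_zero (h : Good x a β γ c t₀ (m+1)) : Good x 1 β γ c t₀ m := by
  obtain ⟨hx, ht, ha, hβ, hγ, h1, h2, h3⟩ := h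
  exact ⟨fun i j hi hj => hx i j (by omega) (by omega),
    fun i hi => ht i (by omega), by norm_num, hβ, hγ,
    fun k hk v => h1 k (by omega) v, fun k hk => h2 k (by omega),
    fun k hk i hi => h3 k (by omega) i (by omega)⟩

lemma good_one (h : Good x a β γ c t₀ (m+1)) :
    Good x (upa a β γ m) β γ (upc a γ c m) t₀ m := by
  obtain ⟨hx, ht, ha, hβ, hγ, h1, h2, h3⟩ := h
  have ha0 : 0 < a := by linarith
  have hginv : 0 ≤ γ (m-1) / a := div_nonneg (hγ (m-1)).1 ha0.le
  refine ⟨fun i j hi hj => hx i j (by omega) (by omega),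
    fun i hi => ht i (by omega), ?_, hβ, hγ, ?_, ?_, ?_⟩
  · unfold upa
    have h1' : γ (m-1) * β m ≤ 1/2 * (1/2) :=
      mul_le_mul (hγ (m-1)).2 (hβ m).2 (hβ m).1 (by norm_num)
    have h2' : 0 ≤ γ (m-1) * β m := mul_nonneg (hγ (m-1)).1 (hβ m).1
    have : γ (m-1) * β m / a < 1/2 := by
      rw [div_lt_iff₀ ha0]; nlinarith
    linarith
  · intro k hk v
    unfold upc
    rcases eq_or_ne k (m-1) with rfl | hne
    · rw [Function.update_self]
      have := h1 (m-1) (by omega) v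
      have := h1 m (by omega) v
      positivity
    · rw [Function.update_of_ne hne]; exact h1 k (by omega) v
  · intro k hk
    unfold upc
    rcases eq_or_ne k (m-1) with rfl | hne
    · rw [Function.update_self]
      have := h2 (m-1) (by omega)
      have := h1 m (by omega) t₀
      nlinarith
    · rw [Function.update_of_ne hne]; exact h2 k (by omega)
  · intro k hk i hi
    unfold upc
    rcases eq_or_ne k (m-1) with rfl | hne
    · rw [Function.update_self, h3 (m-1) (by omega) i (by omega),
        h3 m (by omega) i (by omega)]
      ring
    · rw [Function.update_of_ne hne]; exact h3 k (by omega) i (by omega)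

lemma branches_mem_cases {m : ℕ} {a : ℚ} {c : ℕ → σ → ℚ}
    {φ : MvPolynomial σ ℚ →ₐ[ℚ] MvPolynomial σ ℚ}
    (h : φ ∈ branches x β γ (m+1) a c) :
    (∃ φ' ∈ branches x β γ m 1 c, φ = φ'.comp (sub (x m) 0)) ∨
    (∃ φ' ∈ branches x β γ m (upa a β γ m) (upc a γ c m),
      φ = φ'.comp (sub (x m) (sVal x a β c m))) := by
  rw [branches, List.mem_append] at h
  rcases h with h | h <;> rw [List.mem_map] at h <;> obtain ⟨φ', hφ', rfl⟩ := h
  · exact Or.inl ⟨φ', hφ', rfl⟩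
  · exact Or.inr ⟨φ', hφ', rfl⟩

lemma branches_fix :
    ∀ m (a : ℚ) (c : ℕ → σ → ℚ), ∀ φ ∈ branches x β γ m a c,
      ∀ v, (∀ i, i < m → v ≠ x i) → φ (X v) = X v := by
  intro m
  induction m with
  | zero =>
      intro a c φ hφ v _
      simp only [branches, List.mem_singleton] at hφ
      subst hφ; rfl
  | succ m ih =>
      intro a c φ hφ v hv
      have hvm : v ≠ x m := hv m (by omega)
      rcases branches_mem_cases x β γ hφ with ⟨φ', hφ', rfl⟩ | ⟨φ', hφ', rfl⟩ <;>
        · simp only [AlgHom.coe_comp, Function.comp_apply]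
          rw [sub_X_ne _ _ hvm]
          exact ih _ _ φ' hφ' v (fun i hi => hv i (by omega))

lemma branches_lin :
    ∀ m (a : ℚ) (c : ℕ → σ → ℚ), ∀ φ ∈ branches x β γ m a c,
      ∀ w : σ → ℚ, (∀ i, i < m → w (x i) = 0) → φ (lin w) = lin w := by
  intro m
  induction m with
  | zero =>
      intro a c φ hφ w _
      simp only [branches, List.mem_singleton] at hφ
      subst hφ; rfl
  | succ m ih =>
      intro a c φ hφ w hw
      rcases branches_mem_cases x β γ hφ with ⟨φ', hφ', rfl⟩ | ⟨φ', hφ', rfl⟩ <;>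
        · simp only [AlgHom.coe_comp, Function.comp_apply]
          rw [sub_lin _ _ _ (hw m (by omega))]
          exact ih _ _ φ' hφ' w (fun i hi => hw i (by omega))

lemma branches_sVal {m : ℕ} {a a' : ℚ} {c c' : ℕ → σ → ℚ}
    {φ' : MvPolynomial σ ℚ →ₐ[ℚ] MvPolynomial σ ℚ}
    (hφ' : φ' ∈ branches x β γ m a' c')
    (hcm : ∀ i, i < m → c m (x i) = 0) :
    φ' (sVal x a β c m)
      = C a⁻¹ * ((if m = 0 then 0 else C (β m) * φ' (X (x (m-1)))) + lin (c m)) := by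
  rw [sVal, map_mul, algHom_C, map_add, branches_lin x β γ m a' c' φ' hφ' (c m) hcm]
  congr 1
  congr 1
  by_cases h : m = 0
  · simp [h]
  · rw [if_neg h, if_neg h, map_mul, algHom_C]

lemma sub_sVal_fix {m : ℕ} {a : ℚ} {c : ℕ → σ → ℚ} (p : MvPolynomial σ ℚ)
    (hx : ∀ i j, i < m+1 → j < m+1 → x i = x j → i = j)
    (hcm : c m (x m) = 0) :
    sub (x m) p (sVal x a β c m) = sVal x a β c m := by
  rw [sVal, map_mul, sub_C, map_add, sub_lin _ _ _ hcm]
  congr 2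
  by_cases h : m = 0
  · simp [h]
  · rw [if_neg h, map_mul, sub_C]
    congr 1
    refine sub_X_ne _ _ (fun he => ?_)
    have := hx (m-1) m (by omega) (by omega) he
    omega

lemma branches_X_nonneg :
    ∀ m (a : ℚ) (c : ℕ → σ → ℚ), Good x a β γ c t₀ m →
      ∀ φ ∈ branches x β γ m a c, ∀ i, i < m → ∀ d, 0 ≤ coeff d (φ (X (x i))) := by
  intro m
  induction m with
  | zero => intro _ _ _ _ _ i hi; omega
  | succ m ih =>
      intro a c hG φ hφ i hi d
      have ha0 : (0:ℚ) < a := by have := hG.ha; linarith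
      rcases branches_mem_cases x β γ hφ with ⟨φ', hφ', rfl⟩ | ⟨φ', hφ', rfl⟩
      · rcases eq_or_ne i m with heq | him
        · subst heq
          simp only [AlgHom.coe_comp, Function.comp_apply, sub_X_same, map_zero]
          simp
        · simp only [AlgHom.coe_comp, Function.comp_apply]
          rw [sub_X_ne _ _ (fun he => him (hG.hx i m (by omega) (by omega) he))]
          exact ih 1 c (good_zero x a β γ c t₀ hG) φ' hφ' i (by omega) d
      · rcases eq_or_ne i m with heq | him
        · subst heq
          simp only [AlgHom.coe_comp, Function.comp_apply, sub_X_same]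
          rw [branches_sVal x β γ hφ' (fun j hj => hG.hc3 i (by omega) j (by omega))]
          rw [coeff_C_mul, coeff_add]
          have hlin : 0 ≤ coeff d (lin (c i)) :=
            coeff_lin_nonneg (c i) (fun v => hG.hc1 i (by omega) v) d
          have hB : 0 ≤ coeff d (if i = 0 then 0
              else C (β i) * φ' (X (x (i-1)))) := by
            by_cases h : i = 0
            · simp [h]
            · rw [if_neg h, coeff_C_mul]
              exact mul_nonneg (hG.hβ i).1
                (ih _ _ (good_one x a β γ c t₀ hG) φ' hφ' (i-1) (by omega) d)
          exact mul_nonneg (by positivity) (by linarith)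
        · simp only [AlgHom.coe_comp, Function.comp_apply]
          rw [sub_X_ne _ _ (fun he => him (hG.hx i m (by omega) (by omega) he))]
          exact ih _ _ (good_one x a β γ c t₀ hG) φ' hφ' i (by omega) d

lemma sub_theta_top0 (m : ℕ) :
    sub (x m) 0 (theta x a β γ c (m+1) m) = 0 := by
  rw [theta, map_mul, sub_X_same, zero_mul]

lemma theta_top_factor (m : ℕ) (ha0 : a ≠ 0) :
    theta x a β γ c (m+1) m
      = C a * (X (x m) * (X (x m) - sVal x a β c m)) := by
  rw [theta, sVal, if_pos (by omega : m = (m+1) - 1), if_neg (by omega : ¬ m + 2 ≤ m + 1)]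
  have hCa : (C a : MvPolynomial σ ℚ) * C a⁻¹ = 1 := by
    rw [← map_mul, mul_inv_cancel₀ ha0, map_one]
  linear_combination (X (x m) *
    ((if m = 0 then 0 else C (β m) * X (x (m-1))) + lin (c m))) * hCa


lemma sub_theta_top1 (m : ℕ) (ha0 : a ≠ 0)
    (hx : ∀ i j, i < m+1 → j < m+1 → x i = x j → i = j)
    (hcm : c m (x m) = 0) :
    sub (x m) (sVal x a β c m) (theta x a β γ c (m+1) m) = 0 := by
  rw [theta_top_factor x a β γ c m ha0, map_mul, sub_C, map_mul, map_sub, sub_X_same,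
    sub_sVal_fix x β _ hx hcm, sub_self, mul_zero, mul_zero]


lemma sub_theta_lower0 (m k : ℕ) (hk : k < m)
    (hx : ∀ i j, i < m+1 → j < m+1 → x i = x j → i = j)
    (hck : c k (x m) = 0) :
    sub (x m) 0 (theta x a β γ c (m+1) k) = theta x 1 β γ c m k := by
  have hxkm : x k ≠ x m := fun he => by have := hx k m (by omega) (by omega) he; omega
  have hB : ∀ p : MvPolynomial σ ℚ,
      sub (x m) p (if k = 0 then 0 else C (β k) * X (x (k-1)))
        = (if k = 0 then 0 else C (β k) * X (x (k-1))) := by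
    intro p
    by_cases h0 : k = 0
    · simp [h0]
    · have hne : x (k-1) ≠ x m := fun he => by
        have := hx (k-1) m (by omega) (by omega) he; omega
      rw [if_neg h0, map_mul, sub_C, sub_X_ne _ _ hne]
  rw [theta, theta, map_mul, sub_X_ne _ _ hxkm, map_sub, map_sub, map_sub,
    sub_lin _ _ _ hck, hB, if_neg (show ¬ k = m + 1 - 1 by omega), ite_self,
    map_mul, sub_C, sub_X_ne _ _ hxkm]
  by_cases h2 : k + 2 ≤ m
  · have hne : x (k+1) ≠ x m := fun he => by
      have := hx (k+1) m (by omega) (by omega) he; omega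
    rw [if_pos (show k+2 ≤ m+1 by omega), if_pos h2, map_mul, sub_C, sub_X_ne _ _ hne]
  · have hk1 : k + 1 = m := by omega
    rw [if_pos (show k+2 ≤ m+1 by omega), if_neg h2, map_mul, sub_C, hk1, sub_X_same,
      mul_zero]

lemma sub_theta_lower1 (m k : ℕ) (hk : k < m)
    (hx : ∀ i j, i < m+1 → j < m+1 → x i = x j → i = j)
    (hck : c k (x m) = 0) (hcm : c m (x m) = 0) :
    sub (x m) (sVal x a β c m) (theta x a β γ c (m+1) k)
      = theta x (upa a β γ m) β γ (upc a γ c m) m k := by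
  have hxkm : x k ≠ x m := fun he => by have := hx k m (by omega) (by omega) he; omega
  have hB : ∀ p : MvPolynomial σ ℚ,
      sub (x m) p (if k = 0 then 0 else C (β k) * X (x (k-1)))
        = (if k = 0 then 0 else C (β k) * X (x (k-1))) := by
    intro p
    by_cases h0 : k = 0
    · simp [h0]
    · have hne : x (k-1) ≠ x m := fun he => by
        have := hx (k-1) m (by omega) (by omega) he; omega
      rw [if_neg h0, map_mul, sub_C, sub_X_ne _ _ hne]
  rw [theta, theta, map_mul, sub_X_ne _ _ hxkm, map_sub, map_sub, map_sub,
    sub_lin _ _ _ hck, hB, if_neg (show ¬ k = m + 1 - 1 by omega),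
    map_mul, sub_C, sub_X_ne _ _ hxkm]
  by_cases h2 : k + 2 ≤ m
  · have hupck : upc a γ c m k = c k := Function.update_of_ne (by omega) _ _
    have hne : x (k+1) ≠ x m := fun he => by
      have := hx (k+1) m (by omega) (by omega) he; omega
    rw [hupck, if_neg (show ¬ k = m - 1 by omega),
      if_pos (show k+2 ≤ m+1 by omega), if_pos h2, map_mul, sub_C, sub_X_ne _ _ hne]
  · -- k = m - 1 : the interesting case
    have hk1 : m = k + 1 := by omega
    subst hk1
    rw [if_pos (show k = (k+1)-1 by omega), if_pos (show k+2 ≤ k+1+1 by omega),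
      if_neg (show ¬ k+2 ≤ k+1 by omega), map_mul, sub_C, sub_X_same]
    have hupck : upc a γ c (k+1) k
        = fun v => c k v + γ k / a * c (k+1) v := by
      have h1 : (k+1) - 1 = k := by omega
      rw [upc, h1]
      exact Function.update_self _ _ _
    have h1 : ((k:ℕ)+1) - 1 = k := by omega
    rw [hupck, lin_add, lin_smul, sVal, upa, h1, if_neg (show ¬ (k+1) = 0 by omega)]
    congr 1
    simp only [div_eq_mul_inv, map_sub, map_mul, map_one]
    ring

lemma branches_theta :
    ∀ m (a : ℚ) (c : ℕ → σ → ℚ), Good x a β γ c t₀ m →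
      ∀ φ ∈ branches x β γ m a c, ∀ k, k < m → φ (theta x a β γ c m k) = 0 := by
  intro m
  induction m with
  | zero => intro _ _ _ _ _ k hk; omega
  | succ m ih =>
      intro a c hG φ hφ k hk
      have ha0 : a ≠ 0 := by have := hG.ha; intro h; rw [h] at this; norm_num at this
      rcases branches_mem_cases x β γ hφ with ⟨φ', hφ', rfl⟩ | ⟨φ', hφ', rfl⟩
      · simp only [AlgHom.coe_comp, Function.comp_apply]
        rcases eq_or_ne k m with rfl | hkm
        · rw [sub_theta_top0, map_zero]
        · rw [sub_theta_lower0 x a β γ c m k (by omega) hG.hx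
            (hG.hc3 k (by omega) m (by omega))]
          exact ih 1 c (good_zero x a β γ c t₀ hG) φ' hφ' k (by omega)
      · simp only [AlgHom.coe_comp, Function.comp_apply]
        rcases eq_or_ne k m with rfl | hkm
        · rw [sub_theta_top1 x a β γ c k ha0 hG.hx (hG.hc3 k (by omega) k (by omega)),
            map_zero]
        · rw [sub_theta_lower1 x a β γ c m k (by omega) hG.hx
            (hG.hc3 k (by omega) m (by omega)) (hG.hc3 m (by omega) m (by omega))]
          exact ih _ _ (good_one x a β γ c t₀ hG) φ' hφ' k (by omega)

/-- the span of the relations lies in the kernel of every branch map -/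
lemma branches_ideal {m : ℕ} {a : ℚ} {c : ℕ → σ → ℚ} (hG : Good x a β γ c t₀ m)
    {φ : MvPolynomial σ ℚ →ₐ[ℚ] MvPolynomial σ ℚ} (hφ : φ ∈ branches x β γ m a c)
    {g : MvPolynomial σ ℚ} (hg : g ∈ Ideal.span (theta x a β γ c m '' Set.Iio m)) :
    φ g = 0 := by
  have : Ideal.span (theta x a β γ c m '' Set.Iio m) ≤ RingHom.ker φ.toRingHom := by
    rw [Ideal.span_le]
    rintro _ ⟨k, hk, rfl⟩
    exact branches_theta x β γ t₀ m a c hG φ hφ k hk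
  exact this hg

/-- nonvanishing of the branch images of the substituted value -/
lemma branches_sVal_ne {m : ℕ} {a : ℚ} {c : ℕ → σ → ℚ} (hG : Good x a β γ c t₀ (m+1))
    {φ' : MvPolynomial σ ℚ →ₐ[ℚ] MvPolynomial σ ℚ}
    (hφ' : φ' ∈ branches x β γ m (upa a β γ m) (upc a γ c m)) :
    φ' (sVal x a β c m) ≠ 0 := by
  have ha0 : (0:ℚ) < a := by have := hG.ha; linarith
  intro h
  have hco := congrArg (coeff (Finsupp.single t₀ 1)) h
  rw [branches_sVal x β γ hφ' (fun j hj => hG.hc3 m (by omega) j (by omega)),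
    coeff_C_mul, coeff_add, coeff_lin_single, coeff_zero] at hco
  have hB : 0 ≤ coeff (Finsupp.single t₀ 1)
      (if m = 0 then 0 else C (β m) * φ' (X (x (m-1)))) := by
    by_cases h0 : m = 0
    · simp [h0]
    · rw [if_neg h0, coeff_C_mul]
      exact mul_nonneg (hG.hβ m).1
        (branches_X_nonneg x β γ t₀ m _ _ (good_one x a β γ c t₀ hG) φ' hφ'
          (m-1) (by omega) _)
  have h2 : 1 ≤ c m t₀ := hG.hc2 m (by omega)
  have : (0:ℚ) < a⁻¹ * (coeff (Finsupp.single t₀ 1)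
      (if m = 0 then 0 else C (β m) * φ' (X (x (m-1)))) + c m t₀) := by
    have : (0:ℚ) < a⁻¹ := by positivity
    nlinarith
  linarith [this, hco.ge, hco.le]

lemma map_span_one {m : ℕ} {a : ℚ} {c : ℕ → σ → ℚ} (hG : Good x a β γ c t₀ (m+1))
    {h : MvPolynomial σ ℚ}
    (hh : h ∈ Ideal.span (theta x a β γ c (m+1) '' Set.Iio m)) :
    sub (x m) (sVal x a β c m) h
      ∈ Ideal.span (theta x (upa a β γ m) β γ (upc a γ c m) m '' Set.Iio m) := by
  induction hh using Submodule.span_induction with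
  | mem p hp =>
      obtain ⟨k, hk, rfl⟩ := hp
      simp only [Set.mem_Iio] at hk
      rw [sub_theta_lower1 x a β γ c m k hk hG.hx
        (hG.hc3 k (by omega) m (by omega)) (hG.hc3 m (by omega) m (by omega))]
      exact Ideal.subset_span ⟨k, hk, rfl⟩
  | zero => simp
  | add p q _ _ hp hq => rw [map_add]; exact add_mem hp hq
  | smul r p _ hp =>
      rw [smul_eq_mul, map_mul]
      exact Ideal.mul_mem_left _ _ hp

lemma span_of_branches_zero :
    ∀ m (a : ℚ) (c : ℕ → σ → ℚ), Good x a β γ c t₀ m →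
      ∀ g : MvPolynomial σ ℚ, (∀ φ ∈ branches x β γ m a c, φ g = 0) →
      g ∈ Ideal.span (theta x a β γ c m '' Set.Iio m) := by
  intro m
  induction m with
  | zero =>
      intro a c _ g hg
      have := hg (AlgHom.id ℚ _) (by simp [branches])
      simp only [AlgHom.coe_id, id_eq] at this
      rw [this]
      exact zero_mem _
  | succ m ih =>
      intro a c hG g hg
      have ha0 : a ≠ 0 := by have := hG.ha; intro h; rw [h] at this; norm_num at this
      have hG0 := good_zero x a β γ c t₀ hG
      have hG1 := good_one x a β γ c t₀ hG
      set s : MvPolynomial σ ℚ := sVal x a β c m with hs_def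
      have hψs : sub (x m) s s = s :=
        sub_sVal_fix x β s hG.hx (hG.hc3 m (by omega) m (by omega))
      -- the two branch images of g lie in the child ideals
      have h0 : sub (x m) 0 g ∈ Ideal.span (theta x 1 β γ c m '' Set.Iio m) := by
        refine ih 1 c hG0 _ (fun φ' hφ' => ?_)
        have := hg (φ'.comp (sub (x m) 0)) ?_
        · simpa using this
        · rw [branches, List.mem_append]
          exact Or.inl (List.mem_map.mpr ⟨φ', hφ', rfl⟩)
      have h1 : sub (x m) s g
          ∈ Ideal.span (theta x (upa a β γ m) β γ (upc a γ c m) m '' Set.Iio m) := by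
        refine ih _ _ hG1 _ (fun φ' hφ' => ?_)
        have := hg (φ'.comp (sub (x m) s)) ?_
        · simpa using this
        · rw [branches, List.mem_append]
          exact Or.inr (List.mem_map.mpr ⟨φ', hφ', rfl⟩)
      -- bridges from child ideals into I' plus a linear term
      have bridge0 : Ideal.span (theta x 1 β γ c m '' Set.Iio m)
          ≤ Ideal.span (theta x a β γ c (m+1) '' Set.Iio m)
            ⊔ Ideal.span {X (x m) - 0} := by
        rw [Ideal.span_le]
        rintro _ ⟨k, hk, rfl⟩
        simp only [Set.mem_Iio] at hk
        rw [← sub_theta_lower0 x a β γ c m k hk hG.hx (hG.hc3 k (by omega) m (by omega))]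
        have heq : sub (x m) 0 (theta x a β γ c (m+1) k)
            = theta x a β γ c (m+1) k
              - (theta x a β γ c (m+1) k - sub (x m) 0 (theta x a β γ c (m+1) k)) := by
          ring
        rw [heq]
        exact sub_mem (Submodule.mem_sup_left (Ideal.subset_span ⟨k, hk, rfl⟩))
          (Submodule.mem_sup_right (sub_sub_mem _ _ _))
      have bridge1 : Ideal.span (theta x (upa a β γ m) β γ (upc a γ c m) m '' Set.Iio m)
          ≤ Ideal.span (theta x a β γ c (m+1) '' Set.Iio m)
            ⊔ Ideal.span {X (x m) - s} := by
        rw [Ideal.span_le]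
        rintro _ ⟨k, hk, rfl⟩
        simp only [Set.mem_Iio] at hk
        rw [← sub_theta_lower1 x a β γ c m k hk hG.hx
          (hG.hc3 k (by omega) m (by omega)) (hG.hc3 m (by omega) m (by omega))]
        have heq : sub (x m) s (theta x a β γ c (m+1) k)
            = theta x a β γ c (m+1) k
              - (theta x a β γ c (m+1) k - sub (x m) s (theta x a β γ c (m+1) k)) := by
          ring
        rw [heq]
        exact sub_mem (Submodule.mem_sup_left (Ideal.subset_span ⟨k, hk, rfl⟩))
          (Submodule.mem_sup_right (sub_sub_mem _ _ _))
      -- g belongs to both sups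
      have g0 : g ∈ Ideal.span (theta x a β γ c (m+1) '' Set.Iio m)
          ⊔ Ideal.span {X (x m) - 0} := by
        have heq : g = sub (x m) 0 g + (g - sub (x m) 0 g) := by ring
        rw [heq]
        exact add_mem (bridge0 h0) (Submodule.mem_sup_right (sub_sub_mem _ _ _))
      have g1 : g ∈ Ideal.span (theta x a β γ c (m+1) '' Set.Iio m)
          ⊔ Ideal.span {X (x m) - s} := by
        have heq : g = sub (x m) s g + (g - sub (x m) s g) := by ring
        rw [heq]
        exact add_mem (bridge1 h1) (Submodule.mem_sup_right (sub_sub_mem _ _ _))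
      obtain ⟨h, hh, w, hw, hgw⟩ := Submodule.mem_sup.mp g0
      obtain ⟨r, hr⟩ := Ideal.mem_span_singleton'.mp hw
      -- r * X (x m) also lies in the second sup
      have key : r * X (x m) ∈ Ideal.span (theta x a β γ c (m+1) '' Set.Iio m)
          ⊔ Ideal.span {X (x m) - s} := by
        have heq : r * X (x m) = g - h := by rw [← hgw, ← hr]; ring
        rw [heq]
        exact sub_mem g1 (Submodule.mem_sup_left hh)
      obtain ⟨h₂, hh₂, u, hu, he2⟩ := Submodule.mem_sup.mp key
      obtain ⟨u', hu'⟩ := Ideal.mem_span_singleton'.mp hu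
      -- apply the top substitution
      have hsr : s * sub (x m) s r
          ∈ Ideal.span (theta x (upa a β γ m) β γ (upc a γ c m) m '' Set.Iio m) := by
        have := congrArg (sub (x m) s) he2
        rw [map_add, map_mul, sub_X_same, ← hu', map_mul, map_sub, sub_X_same, hψs,
          sub_self, mul_zero, add_zero] at this
        rw [← mul_comm (sub (x m) s r) s, ← this]
        exact map_span_one x β γ t₀ hG hh₂
      have hr1 : sub (x m) s r
          ∈ Ideal.span (theta x (upa a β γ m) β γ (upc a γ c m) m '' Set.Iio m) := by
        refine ih _ _ hG1 _ (fun φ' hφ' => ?_)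
        have hz : φ' (s * sub (x m) s r) = 0 := branches_ideal x β γ t₀ hG1 hφ' hsr
        rw [map_mul] at hz
        exact (mul_eq_zero.mp hz).resolve_left (branches_sVal_ne x β γ t₀ hG hφ')
      have rfin : r ∈ Ideal.span (theta x a β γ c (m+1) '' Set.Iio m)
          ⊔ Ideal.span {X (x m) - s} := by
        have heq : r = sub (x m) s r + (r - sub (x m) s r) := by ring
        rw [heq]
        exact add_mem (bridge1 hr1) (Submodule.mem_sup_right (sub_sub_mem _ _ _))
      obtain ⟨h₃, hh₃, u₃, hu₃, he3⟩ := Submodule.mem_sup.mp rfin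
      obtain ⟨u₃', hu₃'⟩ := Ideal.mem_span_singleton'.mp hu₃
      -- assemble
      have hI' : Ideal.span (theta x a β γ c (m+1) '' Set.Iio m)
          ≤ Ideal.span (theta x a β γ c (m+1) '' Set.Iio (m+1)) :=
        Ideal.span_mono (Set.image_mono (fun y hy => by
          simp only [Set.mem_Iio] at *; omega))
      have htop : theta x a β γ c (m+1) m
          ∈ Ideal.span (theta x a β γ c (m+1) '' Set.Iio (m+1)) :=
        Ideal.subset_span ⟨m, by simp, rfl⟩
      have hfac : (X (x m) - s) * X (x m)
          = C a⁻¹ * theta x a β γ c (m+1) m := by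
        rw [theta_top_factor x a β γ c m ha0, ← mul_assoc, ← map_mul,
          inv_mul_cancel₀ ha0, map_one, one_mul]
        exact mul_comm _ _
      have hgeq : g = h + h₃ * X (x m) + u₃' * ((X (x m) - s) * X (x m)) := by
        rw [← hgw, ← hr, ← he3, ← hu₃']; ring
      rw [hgeq, hfac]
      exact add_mem (add_mem (hI' hh) (Ideal.mul_mem_right _ _ (hI' hh₃)))
        (Ideal.mul_mem_left _ _ (Ideal.mul_mem_left _ _ htop))

lemma branches_exists :
    ∀ m (a : ℚ) (c : ℕ → σ → ℚ), ∃ φ, φ ∈ branches x β γ m a c := by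
  intro m
  induction m with
  | zero => exact fun a c => ⟨AlgHom.id ℚ _, by simp [branches]⟩
  | succ m ih =>
      intro a c
      obtain ⟨φ, hφ⟩ := ih 1 c
      refine ⟨φ.comp (sub (x m) 0), ?_⟩
      rw [branches, List.mem_append]
      exact Or.inl (List.mem_map.mpr ⟨φ, hφ, rfl⟩)

/-- non-zero-divisor property modulo the span of the relations -/
lemma nzd {m : ℕ} {a : ℚ} {c : ℕ → σ → ℚ} (hG : Good x a β γ c t₀ m)
    (f : MvPolynomial σ ℚ) (hf : ∀ φ ∈ branches x β γ m a c, φ f ≠ 0)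
    {g : MvPolynomial σ ℚ}
    (hfg : f * g ∈ Ideal.span (theta x a β γ c m '' Set.Iio m)) :
    g ∈ Ideal.span (theta x a β γ c m '' Set.Iio m) := by
  refine span_of_branches_zero x β γ t₀ m a c hG g (fun φ hφ => ?_)
  have hz := branches_ideal x β γ t₀ hG hφ hfg
  rw [map_mul] at hz
  exact (mul_eq_zero.mp hz).resolve_left (hf φ hφ)

end Pet

open Pet

/-- the chain variables -/
noncomputable def xf (n : ℕ) : ℕ → Option (Fin (n-1)) :=
  fun i => if h : i < n-1 then some ⟨i, h⟩ else none

/-- the off-diagonal coefficients: all `1/2` -/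
noncomputable def βγf : ℕ → ℚ := fun _ => 1/2

/-- the inhomogeneous parts of the relations in the length-`j` system -/
noncomputable def cf (n j : ℕ) : ℕ → Option (Fin (n-1)) → ℚ :=
  fun k v => (if v = none then 1 else 0)
    + (if k+1 = j ∧ j+1 ≤ n-1 ∧ v = xf n j then 1/2 else 0)

lemma xf_eq {n i : ℕ} (h : i < n-1) : xf n i = some ⟨i, h⟩ := dif_pos h

lemma xf_ne_none {n i : ℕ} (h : i < n-1) : xf n i ≠ none := by
  rw [xf_eq h]; exact Option.some_ne_none _

lemma zVar_eq (n k : ℕ) (h1 : 1 ≤ k) (h2 : k ≤ n-1) :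
    zVar n k = MvPolynomial.X (xf n (k-1)) := by
  rw [zVar, dif_pos (⟨h1, h2⟩ : 1 ≤ k ∧ k ≤ n-1), xf_eq (show k-1 < n-1 by omega)]

lemma zVar_eq_zero (n k : ℕ) (h : ¬(1 ≤ k ∧ k ≤ n-1)) : zVar n k = 0 := dif_neg h

lemma good_cf (n : ℕ) (hn : 2 ≤ n) (j : ℕ) (hj : j ≤ n-1) :
    Good (xf n) 1 βγf βγf (cf n j) none j := by
  refine ⟨?_, ?_, by norm_num, fun k => by norm_num [βγf], fun k => by norm_num [βγf],
    ?_, ?_, ?_⟩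
  · intro i k hi hk he
    rw [xf_eq (show i < n-1 by omega), xf_eq (show k < n-1 by omega)] at he
    simpa using he
  · intro i hi
    exact xf_ne_none (show i < n-1 by omega)
  · intro k hk v
    rw [cf]
    have h1 : (0:ℚ) ≤ if v = none then 1 else 0 := by positivity
    have h2 : (0:ℚ) ≤ if k+1 = j ∧ j+1 ≤ n-1 ∧ v = xf n j then 1/2 else 0 := by positivity
    linarith
  · intro k hk
    rw [cf]
    have : ¬(k+1 = j ∧ j+1 ≤ n-1 ∧ (none : Option (Fin (n-1))) = xf n j) := by
      rintro ⟨-, hj1, he⟩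
      exact xf_ne_none (show j < n-1 by omega) he.symm
    rw [if_pos rfl, if_neg this]
    norm_num
  · intro k hk i hi
    rw [cf]
    have h1 : xf n i ≠ none := xf_ne_none (show i < n-1 by omega)
    have h2 : ¬(k+1 = j ∧ j+1 ≤ n-1 ∧ xf n i = xf n j) := by
      rintro ⟨-, hj1, he⟩
      rw [xf_eq (show i < n-1 by omega), xf_eq (show j < n-1 by omega)] at he
      have : i = j := by simpa using he
      omega
    rw [if_neg h1, if_neg h2]
    norm_num

lemma lin_cf (n : ℕ) (hn : 2 ≤ n) (j i : ℕ) :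
    lin (cf n j i) = MvPolynomial.X none
      + (if i+1 = j ∧ j+1 ≤ n-1 then MvPolynomial.C (1/2:ℚ) * MvPolynomial.X (xf n j)
          else 0) := by
  have : cf n j i = fun v => (if v = none then (1:ℚ) else 0)
      + (if i+1 = j ∧ j+1 ≤ n-1 ∧ v = xf n j then (1/2:ℚ) else 0) := rfl
  rw [this, lin_add, lin_single, map_one, one_mul]
  congr 1
  by_cases hP : i+1 = j ∧ j+1 ≤ n-1
  · have he : (fun v => if i+1 = j ∧ j+1 ≤ n-1 ∧ v = xf n j then (1/2:ℚ) else 0)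
        = fun v => if v = xf n j then (1/2:ℚ) else 0 := by
      funext v
      by_cases hv : v = xf n j <;> simp [hv, hP.1, hP.2]
    rw [he, lin_single, if_pos hP]
  · have he : (fun v => if i+1 = j ∧ j+1 ≤ n-1 ∧ v = xf n j then (1/2:ℚ) else 0)
        = fun _ => (0:ℚ) := by
      funext v
      rw [if_neg (fun h => hP ⟨h.1, h.2.1⟩)]
    rw [he, lin_zero, if_neg hP]

open MvPolynomial in
lemma peterson_eq (n : ℕ) (hn : 2 ≤ n) (j : ℕ) (hj : j ≤ n-1) (i : Fin n)
    (hi : (i:ℕ) < j) :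
    petersonTheta n i = theta (xf n) 1 βγf βγf (cf n j) j (i:ℕ) := by
  set k := (i:ℕ) with hk
  have hk1 : k + 1 ≤ n - 1 := by omega
  rw [petersonTheta, if_pos hk1, theta]
  rw [zVar_eq n (k+1) (by omega) hk1]
  have e1 : (k+1)-1 = k := by omega
  rw [e1]
  congr 1
  rw [ite_self, map_one, one_mul, lin_cf n hn j k]
  have hB : MvPolynomial.C (1/2:ℚ) * zVar n k
      = (if k = 0 then 0
          else MvPolynomial.C (βγf k) * MvPolynomial.X (xf n (k-1))) := by
    by_cases h0 : k = 0
    · rw [if_pos h0, h0, zVar_eq_zero n 0 (by omega), mul_zero]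
    · rw [if_neg h0, zVar_eq n k (by omega) (by omega), βγf]
  rw [hB]
  by_cases h2 : k+2 ≤ j
  · rw [if_pos h2, if_neg (show ¬(k+1 = j ∧ j+1 ≤ n-1) from fun h => by omega)]
    rw [zVar_eq n (k+2) (by omega) (by omega)]
    have e2 : (k+2)-1 = k+1 := by omega
    rw [e2]
    show _ = _ - C (βγf k) * X (xf n (k+1)) - (X none + 0)
    rw [βγf]
    ring
  · have hkj : k+1 = j := by omega
    rw [if_neg (show ¬ k+2 ≤ j by omega)]
    by_cases h3 : j+1 ≤ n-1
    · rw [if_pos (show k+1 = j ∧ j+1 ≤ n-1 from ⟨hkj, h3⟩), zVar_eq n (k+2) (by omega) (by omega)]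
      have e2 : (k+2)-1 = j := by omega
      rw [e2]
      ring
    · rw [if_neg (show ¬(k+1 = j ∧ j+1 ≤ n-1) from fun h => h3 h.2), zVar_eq_zero n (k+2) (by omega)]
      ring

open MvPolynomial in
lemma coeff_single_X_ne {τ : Type*} [DecidableEq τ] {u v : τ} (h : u ≠ v) :
    coeff (Finsupp.single v 1) (X u : MvPolynomial τ ℚ) = 0 := by
  rw [coeff_X', if_neg]
  intro he
  exact h (Finsupp.single_left_injective one_ne_zero he)

open MvPolynomial in
lemma coeff_t_zVar (n k : ℕ) :
    coeff (Finsupp.single (none : Option (Fin (n-1))) 1) (zVar n k) = 0 := by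
  rw [zVar]
  split
  · exact coeff_single_X_ne (Option.some_ne_none _)
  · exact coeff_zero _

open MvPolynomial in

/-- For `n ≥ 2`, the sequence `θ₁, …, θ_{n-1}, θ_n = t` with
`θ_k = z_k (z_k − (1/2) z_{k-1} − (1/2) z_{k+1} − t)` (convention `z₀ = z_n = 0`)
is a regular sequence in `ℚ[z₁,…,z_{n-1},t]`. -/
theorem petersonTheta_isRegularSeq (n : ℕ) (hn : 2 ≤ n) :
    IsRegularSeq (petersonTheta n) := by
  constructor
  · intro j
    have hm : (j:ℕ) ≤ n - 1 := by omega
    have hxfj : ∀ i : ℕ, (i:ℕ) < n-1 → ∀ l, l < n-1 → i ≠ l → xf n i ≠ xf n l := by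
      intro i hi l hl hne he
      rw [xf_eq hi, xf_eq hl] at he
      exact hne (by simpa using he)
    have himg : petersonTheta n '' {i : Fin n | i < j}
        = theta (xf n) 1 βγf βγf (cf n (j:ℕ)) (j:ℕ) '' Set.Iio (j:ℕ) := by
      ext p
      constructor
      · rintro ⟨i, hi, rfl⟩
        have hi' : (i:ℕ) < (j:ℕ) := hi
        exact ⟨(i:ℕ), hi', (peterson_eq n hn (j:ℕ) hm i hi').symm⟩
      · rintro ⟨k, hk, rfl⟩
        simp only [Set.mem_Iio] at hk
        refine ⟨⟨k, by omega⟩, ?_, ?_⟩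
        · show (⟨k, by omega⟩ : Fin n) < j
          rw [Fin.lt_def]
          exact hk
        · exact peterson_eq n hn (j:ℕ) hm ⟨k, by omega⟩ hk
    suffices H : ∀ S : Set (MvPolynomial (Option (Fin (n - 1))) ℚ),
        S = theta (xf n) 1 βγf βγf (cf n (j:ℕ)) (j:ℕ) '' Set.Iio (j:ℕ) →
        (Ideal.Quotient.mk (Ideal.span S) (petersonTheta n j) ≠ 0 ∧
          Function.Injective fun x : MvPolynomial (Option (Fin (n - 1))) ℚ ⧸ Ideal.span S =>
            Ideal.Quotient.mk (Ideal.span S) (petersonTheta n j) * x) from H _ himg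
    intro S hS
    subst hS
    have hGood := good_cf n hn (j:ℕ) hm
    set d : (Option (Fin (n-1))) →₀ ℕ := Finsupp.single none 1 with hd_def
    have hφne : ∀ φ ∈ branches (xf n) βγf βγf (j:ℕ) 1 (cf n (j:ℕ)),
        φ (petersonTheta n j) ≠ 0 := by
      intro φ hφ
      have hDfix : φ (X (none : Option (Fin (n-1)))) = X none :=
        branches_fix (xf n) βγf βγf (j:ℕ) 1 (cf n (j:ℕ)) φ hφ none
          (fun i hi => (xf_ne_none (show i < n-1 by omega)).symm)
      by_cases hcase : (j:ℕ)+1 ≤ n-1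
      · rw [petersonTheta, if_pos hcase, map_mul]
        have e1 : ((j:ℕ)+1)-1 = (j:ℕ) := by omega
        have hA : φ (zVar n ((j:ℕ)+1)) = X (xf n (j:ℕ)) := by
          rw [zVar_eq n ((j:ℕ)+1) (by omega) hcase, e1]
          exact branches_fix (xf n) βγf βγf (j:ℕ) 1 (cf n (j:ℕ)) φ hφ _
            (fun i hi => hxfj (j:ℕ) (by omega) i (by omega) (by omega))
        have hC : φ (C (1/2:ℚ) * zVar n ((j:ℕ)+2)) = C (1/2:ℚ) * zVar n ((j:ℕ)+2) := by
          by_cases h4 : (j:ℕ)+2 ≤ n-1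
          · rw [zVar_eq n ((j:ℕ)+2) (by omega) h4, map_mul, Pet.algHom_C]
            congr 1
            have e2 : ((j:ℕ)+2)-1 = (j:ℕ)+1 := by omega
            rw [e2]
            exact branches_fix (xf n) βγf βγf (j:ℕ) 1 (cf n (j:ℕ)) φ hφ _
              (fun i hi => hxfj ((j:ℕ)+1) (by omega) i (by omega) (by omega))
          · rw [zVar_eq_zero n ((j:ℕ)+2) (by omega), mul_zero, map_zero]
        refine mul_ne_zero ?_ ?_
        · rw [hA]
          exact X_ne_zero _
        · intro hW0
          rw [map_sub, map_sub, map_sub, hA, hC, hDfix] at hW0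
          have hcoeff := congrArg (coeff d) hW0
          rw [coeff_zero, coeff_sub, coeff_sub, coeff_sub, coeff_C_mul] at hcoeff
          have c1 : coeff d (X (xf n (j:ℕ)) : MvPolynomial (Option (Fin (n-1))) ℚ) = 0 :=
            coeff_single_X_ne (xf_ne_none (show (j:ℕ) < n-1 by omega))
          have c3 : coeff d (zVar n ((j:ℕ)+2)) = 0 := coeff_t_zVar n _
          have c4 : coeff d (X (none : Option (Fin (n-1))) : MvPolynomial (Option (Fin (n-1))) ℚ) = 1 := by
            rw [hd_def]; exact coeff_X_same _
          have c2 : 0 ≤ coeff d (φ (C (1/2:ℚ) * zVar n (j:ℕ))) := by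
            by_cases h0 : (j:ℕ) = 0
            · rw [h0, zVar_eq_zero n 0 (by omega), mul_zero, map_zero, coeff_zero]
            · rw [zVar_eq n (j:ℕ) (by omega) (by omega), map_mul, Pet.algHom_C, coeff_C_mul]
              have := branches_X_nonneg (xf n) βγf βγf none (j:ℕ) 1 (cf n (j:ℕ))
                hGood φ hφ ((j:ℕ)-1) (by omega) d
              have hb : (0:ℚ) ≤ 1/2 := by norm_num
              exact mul_nonneg hb this
            -- note: coeff_C_mul already applied in hcoeff; recompute below
          rw [c1, c3, c4] at hcoeff
          -- hcoeff : 0 = 0 - coeff d (φ (C ½ * zVar n j)) - ½ * 0 - 1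
          have : coeff d (φ (C (1/2:ℚ) * zVar n (j:ℕ))) = -1 := by linarith
          linarith [c2, this]
      · rw [petersonTheta, if_neg hcase, hDfix]
        exact X_ne_zero _
    constructor
    · rw [Ne, Ideal.Quotient.eq_zero_iff_mem]
      intro hmem
      obtain ⟨φ, hφ⟩ := branches_exists (xf n) βγf βγf (j:ℕ) 1 (cf n (j:ℕ))
      exact hφne φ hφ (branches_ideal (xf n) βγf βγf none hGood hφ hmem)
    · intro p q hpq
      obtain ⟨u, rfl⟩ := Ideal.Quotient.mk_surjective p
      obtain ⟨v, rfl⟩ := Ideal.Quotient.mk_surjective q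
      simp only [← map_mul] at hpq
      rw [Ideal.Quotient.mk_eq_mk_iff_sub_mem] at hpq
      rw [Ideal.Quotient.mk_eq_mk_iff_sub_mem]
      have : petersonTheta n j * (u - v)
          ∈ Ideal.span (theta (xf n) 1 βγf βγf (cf n (j:ℕ)) (j:ℕ) '' Set.Iio (j:ℕ)) := by
        rw [mul_sub]
        exact hpq
      exact nzd (xf n) βγf βγf none hGood _ hφne this
  · have hker : Ideal.span (Set.range (petersonTheta n))
        ≤ RingHom.ker (constantCoeff : MvPolynomial (Option (Fin (n-1))) ℚ →+* ℚ) := by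
      rw [Ideal.span_le]
      rintro _ ⟨i, rfl⟩
      rw [SetLike.mem_coe, RingHom.mem_ker, petersonTheta]
      by_cases h : (i:ℕ)+1 ≤ n-1
      · rw [if_pos h, map_mul, zVar_eq n _ (by omega) h, constantCoeff_X, zero_mul]
      · rw [if_neg h, constantCoeff_X]
    refine Ideal.Quotient.nontrivial_iff.mpr ?_
    rw [Ne, Ideal.eq_top_iff_one]
    intro h1
    have := hker h1
    rw [RingHom.mem_ker, map_one] at this
    exact one_ne_zero this
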